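/- arXiv:2012.04833 — 3 statements merged into one kernel-verified Lean document; each statement's English description precedes it below -/
import Mathlib

section
/- Let s ∈ (0,1) with s ≠ 1/2, let a > 0 and b ∈ (-a, a) with b ≠ 0. Then there exists a unique γ ∈ (0, 2s) satisfying tan(πs) = (a/b) tan(π(s-γ)). Moreover, if s > 1/2, then γ ∈ (2s-1, 1). -/
set_option maxHeartbeats 1000000

open Real Set

theorem stmt2 (s a b : ℝ) (hs : s ∈ Set.Ioo (0:ℝ) 1) (hs2 : s ≠ 1/2)
    (ha : 0 < a) (hb : b ∈ Set.Ioo (-a) a) (hb0 : b ≠ 0) :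
    (∃! γ : ℝ, γ ∈ Set.Ioo 0 (2*s) ∧
      Real.tan (Real.pi * s) = (a/b) * Real.tan (Real.pi * (s - γ))) ∧
    (1/2 < s → ∀ γ : ℝ, γ ∈ Set.Ioo 0 (2*s) →
      Real.tan (Real.pi * s) = (a/b) * Real.tan (Real.pi * (s - γ)) →
      γ ∈ Set.Ioo (2*s - 1) 1) := by
  obtain ⟨hs0, hs1⟩ := hs
  obtain ⟨hba, hab⟩ := hb
  have hpi := Real.pi_pos
  have ha' : a ≠ 0 := ne_of_gt ha
  set T := Real.tan (Real.pi * s) with hT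
  set c := b / a * T with hc
  -- sign of T
  have hTsgn : (s < 1/2 ∧ 0 < T) ∨ (1/2 < s ∧ T < 0) := by
    rcases lt_or_gt_of_ne hs2 with h | h
    · left
      refine ⟨h, Real.tan_pos_of_pos_of_lt_pi_div_two (by positivity) (by nlinarith)⟩
    · right
      refine ⟨h, ?_⟩
      have : Real.tan (Real.pi * s - Real.pi) < 0 :=
        Real.tan_neg_of_neg_of_pi_div_two_lt (by nlinarith) (by nlinarith)
      rwa [Real.tan_periodic.sub_eq] at this
  have hT0 : T ≠ 0 := by rcases hTsgn with ⟨_, h⟩ | ⟨_, h⟩ <;> [exact ne_of_gt h; exact ne_of_lt h]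
  have hc0 : c ≠ 0 := by
    simp only [hc]
    exact mul_ne_zero (div_ne_zero hb0 ha') hT0
  -- |c| < |T|
  have hcabs : |c| < |T| := by
    rw [hc, abs_mul, abs_div]
    have h1 : |b| < a := abs_lt.mpr ⟨hba, hab⟩
    have h2 : |b| / |a| < 1 := by
      rw [abs_of_pos ha, div_lt_one ha]; exact h1
    calc |b| / |a| * |T| < 1 * |T| := by
          apply mul_lt_mul_of_pos_right h2 (abs_pos.mpr hT0)
      _ = |T| := one_mul _
  -- arctan c ∈ (-(π*s), π*s)
  have harc_mem : Real.arctan c ∈ Set.Ioo (-(Real.pi * s)) (Real.pi * s) := by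
    rcases hTsgn with ⟨h, hTp⟩ | ⟨h, hTn⟩
    · have hps : Real.pi * s < Real.pi / 2 := by nlinarith
      have hps' : -(Real.pi / 2) < Real.pi * s := by nlinarith
      have hTeq : Real.arctan T = Real.pi * s := Real.arctan_tan (by nlinarith) hps
      have h1 : Real.arctan c < Real.pi * s := by
        rw [← hTeq]
        exact Real.arctan_strictMono (lt_of_abs_lt (by rwa [abs_of_pos hTp] at hcabs))
      have h2 : -(Real.pi * s) < Real.arctan c := by
        have : -T < c := neg_lt_of_abs_lt (by rwa [abs_of_pos hTp] at hcabs)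
        have := Real.arctan_strictMono this
        rwa [Real.arctan_neg, hTeq] at this
      exact ⟨h2, h1⟩
    · have h1 := Real.arctan_lt_pi_div_two c
      have h2 := Real.neg_pi_div_two_lt_arctan c
      constructor <;> nlinarith
  set γ₀ := s - Real.arctan c / Real.pi with hγ₀
  have hkey : Real.pi * (s - γ₀) = Real.arctan c := by
    rw [hγ₀, sub_sub_cancel]; field_simp
  have heq0 : T = a / b * Real.tan (Real.pi * (s - γ₀)) := by
    rw [hkey, Real.tan_arctan, hc]
    field_simp
  have hmem0 : γ₀ ∈ Set.Ioo 0 (2*s) := by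
    obtain ⟨h1, h2⟩ := harc_mem
    constructor
    · rw [hγ₀, sub_pos, div_lt_iff₀ hpi]; nlinarith
    · rw [hγ₀]
      have : -(s) < Real.arctan c / Real.pi := by
        rw [lt_div_iff₀ hpi] at *
        nlinarith
      linarith
  -- uniqueness
  have huniq : ∀ γ : ℝ, γ ∈ Set.Ioo 0 (2*s) →
      T = a / b * Real.tan (Real.pi * (s - γ)) → γ = γ₀ := by
    intro γ ⟨hg1, hg2⟩ heq
    set x := Real.pi * (s - γ) with hx
    have htanx : Real.tan x = c := by
      have : b / a * T = b / a * (a / b * Real.tan x) := by rw [heq]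
      rw [← hc] at this
      rw [this]; field_simp
    have hx1 : -(Real.pi * s) < x := by rw [hx]; nlinarith
    have hx2 : x < Real.pi * s := by rw [hx]; nlinarith
    -- x ∈ (-(π/2), π/2)
    have hxm : x ∈ Set.Ioo (-(Real.pi/2)) (Real.pi/2) := by
      by_contra hcon
      simp only [Set.mem_Ioo, not_and_or, not_lt] at hcon
      rcases hcon with hle | hge
      · -- x ≤ -(π/2)
        have hs12 : 1/2 < s := by nlinarith
        have hTn : T < 0 := by
          rcases hTsgn with ⟨h, _⟩ | ⟨_, h⟩
          · linarith
          · exact h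
        rcases eq_or_lt_of_le hle with heqx | hltx
        · have : Real.tan x = 0 := by
            rw [heqx]
            simp [Real.tan_neg, Real.tan_pi_div_two]
          rw [htanx] at this; exact hc0 this
        · -- x < -(π/2): x + π ∈ (π(1-s), π/2)
          have h1 : Real.pi - Real.pi * s < x + Real.pi := by nlinarith
          have h2 : x + Real.pi < Real.pi / 2 := by linarith
          have h3 : Real.tan (x + Real.pi) = c := by
            rw [Real.tan_periodic x]; exact htanx
          have h4 : Real.tan (Real.pi - Real.pi * s) < Real.tan (x + Real.pi) :=
            Real.strictMonoOn_tan ⟨by nlinarith, by nlinarith⟩ ⟨by nlinarith, h2⟩ h1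
          rw [Real.tan_pi_sub, h3] at h4
          -- c > -T, but |c| < |T| = -T gives c < -T. contradiction
          have : c < -T := lt_of_abs_lt (by rwa [abs_of_neg hTn] at hcabs)
          linarith
      · -- π/2 ≤ x
        have hs12 : 1/2 < s := by nlinarith
        have hTn : T < 0 := by
          rcases hTsgn with ⟨h, _⟩ | ⟨_, h⟩
          · linarith
          · exact h
        rcases eq_or_lt_of_le hge with heqx | hltx
        · have : Real.tan x = 0 := by rw [← heqx]; exact Real.tan_pi_div_two
          rw [htanx] at this; exact hc0 this
        · -- x > π/2: x - π ∈ (-π/2, π(s-1))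
          have h1 : x - Real.pi < Real.pi * s - Real.pi := by linarith
          have h2 : -(Real.pi/2) < x - Real.pi := by linarith
          have h3 : Real.tan (x - Real.pi) = c := by
            rw [Real.tan_periodic.sub_eq]; exact htanx
          have h4 : Real.tan (x - Real.pi) < Real.tan (Real.pi * s - Real.pi) :=
            Real.strictMonoOn_tan ⟨h2, by nlinarith⟩ ⟨by nlinarith, by nlinarith⟩ h1
          rw [h3, Real.tan_periodic.sub_eq, ← hT] at h4
          -- c > T since |c| < |T| = -T
          have h5 : -(-T) < c := neg_lt_of_abs_lt (by rwa [abs_of_neg hTn] at hcabs)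
          rw [neg_neg] at h5
          linarith
    have : x = Real.arctan c :=
      Real.injOn_tan hxm (Real.arctan_mem_Ioo c) (by rw [htanx, Real.tan_arctan])
    have hπγ : Real.pi * (s - γ) = Real.pi * (s - γ₀) := by rw [← hx, this, hkey]
    have := mul_left_cancel₀ (ne_of_gt hpi) hπγ
    linarith
  constructor
  · exact ⟨γ₀, ⟨hmem0, heq0⟩, fun γ ⟨h1, h2⟩ => huniq γ h1 h2⟩
  · intro hs12 γ hγmem hγeq
    have hγ : γ = γ₀ := huniq γ hγmem hγeq
    have hTn : T < 0 := by
      rcases hTsgn with ⟨h, _⟩ | ⟨_, h⟩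
      · linarith
      · exact h
    -- arctan c ∈ (π(s-1), π(1-s))
    have hTe : Real.tan (Real.pi * s - Real.pi) = T := Real.tan_periodic.sub_eq _
    have harcT : Real.arctan T = Real.pi * s - Real.pi := by
      rw [← hTe]
      exact Real.arctan_tan (by nlinarith) (by nlinarith)
    have hTc : T < c := by
      have := neg_lt_of_abs_lt (show |c| < -T by rwa [abs_of_neg hTn] at hcabs)
      linarith
    have hlb : Real.pi * s - Real.pi < Real.arctan c := by
      rw [← harcT]
      exact Real.arctan_strictMono hTc
    have hub : Real.arctan c < Real.pi - Real.pi * s := by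
      have h1 : c < -T := lt_of_abs_lt (by rwa [abs_of_neg hTn] at hcabs)
      have := Real.arctan_strictMono h1
      rwa [Real.arctan_neg, harcT, neg_sub] at this
    rw [hγ, hγ₀]
    constructor
    · have : Real.arctan c / Real.pi < 1 - s := by rw [div_lt_iff₀ hpi]; nlinarith
      linarith
    · have : s - 1 < Real.arctan c / Real.pi := by rw [lt_div_iff₀ hpi]; nlinarith
      linarith
end

section
/- Let s ∈ (0,1) with s ≠ 1/2, a > 0 and b ∈ (-a,a) with b ≠ 0. Then the unique γ ∈ (0,2s) satisfying tan(πs) = (a/b) tan(π(s-γ)) is given by γ = s - (1/π) arctan((b/a) tan(πs)), and this γ also lies in (2s-1, 1). -/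
open Real Set

lemma tan_pi_mul_ne_zero (s : ℝ) (hs : s ∈ Set.Ioo (0:ℝ) 1) (hs2 : s ≠ 1/2) :
    Real.tan (Real.pi * s) ≠ 0 := by
  obtain ⟨hs0, hs1⟩ := hs
  have hpi := Real.pi_pos
  rw [Real.tan_eq_sin_div_cos]
  apply div_ne_zero
  · exact ne_of_gt (Real.sin_pos_of_pos_of_lt_pi (by positivity) (by nlinarith))
  · intro hc
    obtain ⟨n, hn⟩ := Real.cos_eq_zero_iff.mp hc
    have hns : s = ((2*(n:ℝ)+1)/2) := by
      apply mul_left_cancel₀ hpi.ne'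
      rw [hn]; ring
    have hn1 : (-1:ℝ) < (n:ℝ) := by rw [hns] at hs0; push_cast at hs0 ⊢; linarith
    have hn2 : (n:ℝ) < (1:ℝ) := by rw [hns] at hs1; push_cast at hs1 ⊢; linarith
    have hn1' : -1 < n := by exact_mod_cast hn1
    have hn2' : n < 1 := by exact_mod_cast hn2
    have hn0 : n = 0 := by omega
    rw [hn0] at hns
    exact hs2 (by push_cast at hns; linarith)

lemma aux_abs_lt (s a b : ℝ) (hs : s ∈ Set.Ioo (0:ℝ) 1) (hs2 : s ≠ 1/2)
    (ha : 0 < a) (hb : b ∈ Set.Ioo (-a) a) (hb0 : b ≠ 0) :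
    |Real.arctan ((b/a) * Real.tan (Real.pi * s))| < Real.pi * s ∧
    |Real.arctan ((b/a) * Real.tan (Real.pi * s))| < Real.pi * (1 - s) := by
  obtain ⟨hs0, hs1⟩ := hs
  obtain ⟨hb1, hb2⟩ := hb
  have hpi := Real.pi_pos
  have hr : |b/a| < 1 := by
    rw [abs_div, abs_of_pos ha, div_lt_one ha, abs_lt]; exact ⟨hb1, hb2⟩
  set T := Real.tan (Real.pi * s) with hT
  have hT0 : T ≠ 0 := tan_pi_mul_ne_zero s ⟨hs0, hs1⟩ hs2
  have habs : ∀ x : ℝ, |Real.arctan x| = Real.arctan |x| := by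
    intro x
    rcases le_or_gt 0 x with h | h
    · have h0 : Real.arctan 0 ≤ Real.arctan x := Real.arctan_strictMono.monotone h
      rw [Real.arctan_zero] at h0
      rw [abs_of_nonneg h, abs_of_nonneg h0]
    · have h0 : Real.arctan x < Real.arctan 0 := Real.arctan_strictMono h
      rw [Real.arctan_zero] at h0
      rw [abs_of_neg h, abs_of_neg h0, ← Real.arctan_neg]
  have key : Real.arctan |(b/a) * T| < Real.arctan |T| := by
    apply Real.arctan_strictMono
    rw [abs_mul]
    calc |b/a| * |T| < 1 * |T| := mul_lt_mul_of_pos_right hr (abs_pos.mpr hT0)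
      _ = |T| := one_mul _
  rcases lt_or_gt_of_ne hs2 with hlt | hgt
  · have hTpos : 0 < T := Real.tan_pos_of_pos_of_lt_pi_div_two (by positivity) (by nlinarith)
    have heq2 : Real.arctan |T| = Real.pi * s := by
      rw [abs_of_pos hTpos, hT, Real.arctan_tan (by nlinarith) (by nlinarith)]
    rw [heq2] at key
    rw [habs]
    exact ⟨key, by nlinarith⟩
  · have hTeq : T = Real.tan (Real.pi * s - Real.pi) := (Real.tan_periodic.sub_eq _).symm
    have hTneg : T < 0 := by
      rw [hTeq]
      exact Real.tan_neg_of_neg_of_pi_div_two_lt (by nlinarith) (by nlinarith)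
    have heq2 : Real.arctan |T| = Real.pi * (1 - s) := by
      rw [abs_of_neg hTneg, hTeq, ← Real.tan_neg,
        Real.arctan_tan (by nlinarith) (by nlinarith)]
      ring
    rw [heq2] at key
    rw [habs]
    exact ⟨by nlinarith, key⟩

theorem stmt3 (s a b : ℝ) (hs : s ∈ Set.Ioo (0:ℝ) 1) (hs2 : s ≠ 1/2)
    (ha : 0 < a) (hb : b ∈ Set.Ioo (-a) a) (hb0 : b ≠ 0) :
    let γ := s - (1/Real.pi) * Real.arctan ((b/a) * Real.tan (Real.pi * s))
    γ ∈ Set.Ioo 0 (2*s) ∧ γ ∈ Set.Ioo (2*s - 1) 1 ∧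
    Real.tan (Real.pi * s) = (a/b) * Real.tan (Real.pi * (s - γ)) ∧
    ∀ γ' ∈ Set.Ioo 0 (2*s),
      Real.tan (Real.pi * s) = (a/b) * Real.tan (Real.pi * (s - γ')) → γ' = γ := by
  intro γ
  obtain ⟨hk1, hk2⟩ := aux_abs_lt s a b hs hs2 ha hb hb0
  have hpi := Real.pi_pos
  have hpi0 : Real.pi ≠ 0 := hpi.ne'
  set t := Real.arctan ((b/a) * Real.tan (Real.pi * s)) with ht
  have habs1 := abs_lt.mp hk1
  have habs2 := abs_lt.mp hk2
  have ha0 : a ≠ 0 := ha.ne'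
  -- bounds on t/π
  have hd1 : t / Real.pi < s := (div_lt_iff₀ hpi).mpr (by linarith [habs1.2])
  have hd2 : -s < t / Real.pi := (lt_div_iff₀ hpi).mpr (by linarith [habs1.1])
  have hd3 : t / Real.pi < 1 - s := (div_lt_iff₀ hpi).mpr (by linarith [habs2.2])
  have hd4 : -(1-s) < t / Real.pi := (lt_div_iff₀ hpi).mpr (by linarith [habs2.1])
  have hdiv : (1/Real.pi) * t = t / Real.pi := by ring
  have hγeq : Real.pi * (s - γ) = t := by
    show Real.pi * (s - (s - (1/Real.pi) * t)) = t
    field_simp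
    ring
  have htan : Real.tan (Real.pi * (s - γ)) = (b/a) * Real.tan (Real.pi * s) := by
    rw [hγeq, ht, Real.tan_arctan]
  have hmem1 : γ ∈ Set.Ioo 0 (2*s) := by
    constructor
    · show 0 < s - (1/Real.pi) * t
      rw [hdiv]; linarith
    · show s - (1/Real.pi) * t < 2*s
      rw [hdiv]; linarith
  have hmem2 : γ ∈ Set.Ioo (2*s - 1) 1 := by
    constructor
    · show 2*s - 1 < s - (1/Real.pi) * t
      rw [hdiv]; linarith
    · show s - (1/Real.pi) * t < 1
      rw [hdiv]; linarith
  refine ⟨hmem1, hmem2, ?_, ?_⟩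
  · rw [htan]
    field_simp
  · intro γ' hγ' heq
    set x := Real.pi * (s - γ') with hx
    have hxtan : Real.tan x = (b/a) * Real.tan (Real.pi * s) := by
      rw [heq]; field_simp
    have hxt : Real.tan x = Real.tan t := by rw [hxtan, ht, Real.tan_arctan]
    have htmem : t ∈ Set.Ioo (-(Real.pi/2)) (Real.pi/2) := Real.arctan_mem_Ioo _
    have hxlt : x < Real.pi * s := by rw [hx]; nlinarith [hγ'.1]
    have hxgt : -(Real.pi * s) < x := by rw [hx]; nlinarith [hγ'.2]
    have htne : Real.tan t ≠ 0 := by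
      rw [ht, Real.tan_arctan]
      exact mul_ne_zero (div_ne_zero hb0 ha0) (tan_pi_mul_ne_zero s hs hs2)
    have hxeqt : x = t := by
      rcases lt_trichotomy x (Real.pi/2) with h1 | h1 | h1
      · rcases lt_trichotomy (-(Real.pi/2)) x with h2 | h2 | h2
        · exact Real.injOn_tan ⟨h2, h1⟩ htmem hxt
        · exfalso
          apply htne
          rw [← hxt, ← h2, Real.tan_neg, Real.tan_pi_div_two, neg_zero]
        · -- x < -π/2 : then x + π = t, contradiction with t < π(1-s)
          exfalso
          have hs1 := hs.2
          have hx2 : x + Real.pi ∈ Set.Ioo (-(Real.pi/2)) (Real.pi/2) := by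
            constructor
            · nlinarith
            · linarith
          have hteq : x + Real.pi = t := by
            apply Real.injOn_tan hx2 htmem
            rw [Real.tan_periodic x, hxt]
          nlinarith [habs2.2]
      · exfalso
        apply htne
        rw [← hxt, h1, Real.tan_pi_div_two]
      · -- x > π/2 : then x - π = t, contradiction with t > -π(1-s)
        exfalso
        have hs1 := hs.2
        have hx2 : x - Real.pi ∈ Set.Ioo (-(Real.pi/2)) (Real.pi/2) := by
          constructor
          · linarith
          · nlinarith
        have hteq : x - Real.pi = t := by
          apply Real.injOn_tan hx2 htmem
          rw [Real.tan_periodic.sub_eq x, hxt]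
        nlinarith [habs2.1]
    have hfin : Real.pi * (s - γ') = Real.pi * (s - γ) := by rw [← hx, hxeqt, hγeq]
    have := mul_left_cancel₀ hpi0 hfin
    linarith
end

section
/- Let s ∈ (0, 1/2) and β ∈ (0, 2s). Then ∫_ℝ (1 - (1+y)₊^β) |y|^{-1-2s} dy = (Γ(1-2s)/(2s)) · (Γ(2s-β)/Γ(-β) + Γ(1+β)/Γ(1-2s+β)). -/
open Real MeasureTheory Set Filter Topology

lemma real_beta {u v : ℝ} (hu : 0 < u) (hv : 0 < v) :
    ∫ x in (0:ℝ)..1, x ^ (u-1) * (1-x) ^ (v-1) = Gamma u * Gamma v / Gamma (u+v) := by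
  have key := Complex.Gamma_mul_Gamma_eq_betaIntegral (s := (u:ℂ)) (t := (v:ℂ))
    (by simpa using hu) (by simpa using hv)
  have hcast : Complex.betaIntegral u v
      = ((∫ x in (0:ℝ)..1, x ^ (u-1) * (1-x) ^ (v-1) : ℝ) : ℂ) := by
    rw [Complex.betaIntegral, ← intervalIntegral.integral_ofReal]
    refine intervalIntegral.integral_congr fun x hx => ?_
    rw [uIcc_of_le (by norm_num : (0:ℝ) ≤ 1)] at hx
    have h1 : (0:ℝ) ≤ x := hx.1
    have h2 : (0:ℝ) ≤ 1 - x := by linarith [hx.2]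
    push_cast
    rw [Complex.ofReal_cpow h1, Complex.ofReal_cpow h2]
    push_cast
    ring
  rw [hcast] at key
  have hΓ : Complex.Gamma ((u:ℂ) + v) ≠ 0 := by
    rw [← Complex.ofReal_add, Complex.Gamma_ofReal]
    exact_mod_cast (Real.Gamma_pos_of_pos (by linarith)).ne'
  have : ((Gamma u * Gamma v : ℝ) : ℂ) = ((Gamma (u+v) * ∫ x in (0:ℝ)..1, x ^ (u-1) * (1-x) ^ (v-1) : ℝ) : ℂ) := by
    push_cast
    rw [← Complex.Gamma_ofReal, ← Complex.Gamma_ofReal, ← Complex.Gamma_ofReal]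
    push_cast
    rw [key]
  have h2 := Complex.ofReal_inj.mp this
  rw [h2]
  field_simp [(Real.Gamma_pos_of_pos (show (0:ℝ) < u + v by linarith)).ne']

lemma beta_Ioi {u v : ℝ} (hu : 0 < u) (hv : 0 < v) :
    ∫ t in Ioi (0:ℝ), t ^ (u-1) * (1+t) ^ (-(u+v)) = Gamma u * Gamma v / Gamma (u+v) := by
  have himg : (fun x : ℝ => (1-x)/x) '' Ioo 0 1 = Ioi 0 := by
    ext t
    constructor
    · rintro ⟨x, ⟨hx0, hx1⟩, rfl⟩
      exact div_pos (by linarith) hx0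
    · intro ht
      have ht' : (0:ℝ) < t := mem_Ioi.mp ht
      refine ⟨1/(1+t), ⟨by positivity, ?_⟩, ?_⟩
      · rw [div_lt_one (by linarith)]
        linarith
      · have h1t : (0:ℝ) < 1 + t := by linarith [mem_Ioi.mp ht]
        field_simp
        ring
  have hderiv : ∀ x ∈ Ioo (0:ℝ) 1, HasDerivWithinAt (fun x : ℝ => (1-x)/x) (-(x^2)⁻¹) (Ioo 0 1) x := by
    intro x hx
    have hx0 : x ≠ 0 := ne_of_gt hx.1
    have : HasDerivAt (fun x : ℝ => (1-x)/x) (-(x^2)⁻¹) x := by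
      have h := ((hasDerivAt_id x).const_sub 1).div (hasDerivAt_id x) hx0
      refine h.congr_deriv (Eq.symm ?_)
      simp only [id_eq]
      field_simp
      ring
    exact this.hasDerivWithinAt
  have hinj : Set.InjOn (fun x : ℝ => (1-x)/x) (Ioo 0 1) := by
    intro a ha b hb hab
    rw [div_eq_div_iff ha.1.ne' hb.1.ne'] at hab
    ring_nf at hab
    have h2 : a * b = b * a := mul_comm a b
    nlinarith [hab]
  have key := integral_image_eq_integral_abs_deriv_smul measurableSet_Ioo hderiv hinj
    (fun t => t ^ (u-1) * (1+t) ^ (-(u+v)))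
  rw [himg] at key
  rw [key]
  have heq : ∀ x ∈ Ioo (0:ℝ) 1, |(-(x^2)⁻¹)| • (((1-x)/x) ^ (u-1) * (1+(1-x)/x) ^ (-(u+v)))
      = x ^ (v-1) * (1-x) ^ (u-1) := by
    intro x hx
    have hx0 : (0:ℝ) < x := hx.1
    have hx1 : (0:ℝ) < 1 - x := by linarith [hx.2]
    have h1 : 1 + (1-x)/x = 1/x := by field_simp; ring
    have e2 : ((1-x)/x)^(u-1) = (1-x)^(u-1) * x^(1-u) := by
      rw [Real.div_rpow hx1.le hx0.le, div_eq_mul_inv, ← Real.rpow_neg hx0.le, neg_sub]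
    have e3 : ((1:ℝ)/x)^(-(u+v)) = x^(u+v) := by
      rw [one_div, Real.inv_rpow hx0.le, ← Real.rpow_neg hx0.le, neg_neg]
    have e4 : |(-(x^2)⁻¹)| = x^(-2:ℝ) := by
      rw [abs_neg, abs_inv, abs_of_pos (pow_pos hx0 2), ← Real.rpow_natCast x 2,
        ← Real.rpow_neg hx0.le]
      norm_num
    rw [e4, smul_eq_mul, h1, e2, e3]
    have e5 : x^(-2:ℝ) * (x^(1-u) * x^(u+v)) = x^(v-1) := by
      rw [← Real.rpow_add hx0, ← Real.rpow_add hx0]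
      congr 1; ring
    rw [← e5]; ring
  rw [setIntegral_congr_fun measurableSet_Ioo heq]
  rw [← MeasureTheory.integral_Ioc_eq_integral_Ioo, ← intervalIntegral.integral_of_le (by norm_num : (0:ℝ) ≤ 1)]
  rw [real_beta hv hu]
  rw [add_comm v u]
  ring

section aux
variable {a β : ℝ} (ha0 : 0 < a) (ha1 : a < 1) (hb0 : 0 < β) (hba : β < a)

include ha0 ha1 hb0 hba in
lemma int3 : IntegrableOn (fun y : ℝ => (1+y)^(β-1) * y^(-a)) (Ioi 0) := by
  have hmeas : ∀ t : Set ℝ, AEStronglyMeasurable (fun y : ℝ => (1+y)^(β-1) * y^(-a)) (volume.restrict t) := by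
    intro t
    exact (((measurable_const.add measurable_id).pow measurable_const).mul
      (measurable_id.pow measurable_const)).aestronglyMeasurable
  rw [← Ioc_union_Ioi_eq_Ioi (le_of_lt one_pos)]
  refine IntegrableOn.union ?_ ?_
  · refine Integrable.mono' (g := fun y : ℝ => y^(-a)) ?_ (hmeas _) ?_
    · have : IntervalIntegrable (fun y : ℝ => y^(-a)) volume 0 1 :=
        intervalIntegral.intervalIntegrable_rpow' (by linarith)
      exact (intervalIntegrable_iff_integrableOn_Ioc_of_le (by norm_num)).mp this
    · filter_upwards [ae_restrict_mem measurableSet_Ioc] with y hy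
      have hy0 : (0:ℝ) < y := hy.1
      rw [norm_mul, norm_eq_abs, norm_eq_abs, abs_of_nonneg (Real.rpow_nonneg (by linarith) _),
        abs_of_nonneg (Real.rpow_nonneg hy0.le _)]
      calc (1+y)^(β-1) * y^(-a) ≤ 1 * y^(-a) := by
            gcongr
            exact Real.rpow_le_one_of_one_le_of_nonpos (by linarith) (by linarith)
        _ = y^(-a) := one_mul _
  · refine Integrable.mono' (g := fun y : ℝ => y^(β-1-a))
      (integrableOn_Ioi_rpow_of_lt (a := β-1-a) (c := 1) (by linarith) (by norm_num)) (hmeas _) ?_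
    filter_upwards [ae_restrict_mem measurableSet_Ioi] with y hy
    have hy1 : (1:ℝ) < y := hy
    have hy0 : (0:ℝ) < y := by linarith
    rw [norm_mul, norm_eq_abs, norm_eq_abs, abs_of_nonneg (Real.rpow_nonneg (by linarith) _),
      abs_of_nonneg (Real.rpow_nonneg hy0.le _)]
    calc (1+y)^(β-1) * y^(-a) ≤ y^(β-1) * y^(-a) :=
          mul_le_mul_of_nonneg_right
            (Real.rpow_le_rpow_of_nonpos hy0 (by linarith) (by linarith))
            (Real.rpow_nonneg hy0.le _)
      _ = y^(β-1-a) := by rw [← Real.rpow_add hy0]; ring_nf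

include ha0 ha1 hb0 hba in
lemma int4 : IntegrableOn (fun y : ℝ => (1-(1+y)^β) * y^(-1-a)) (Ioi 0) := by
  have hmeas : ∀ t : Set ℝ, AEStronglyMeasurable (fun y : ℝ => (1-(1+y)^β) * y^(-1-a)) (volume.restrict t) := by
    intro t
    exact ((measurable_const.sub ((measurable_const.add measurable_id).pow measurable_const)).mul
      (measurable_id.pow measurable_const)).aestronglyMeasurable
  rw [← Ioc_union_Ioi_eq_Ioi (le_of_lt one_pos)]
  refine IntegrableOn.union ?_ ?_
  · refine Integrable.mono' (g := fun y : ℝ => β * y^(-a)) ?_ (hmeas _) ?_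
    · refine Integrable.const_mul ?_ β
      have : IntervalIntegrable (fun y : ℝ => y^(-a)) volume 0 1 :=
        intervalIntegral.intervalIntegrable_rpow' (by linarith)
      exact (intervalIntegrable_iff_integrableOn_Ioc_of_le (by norm_num)).mp this
    · filter_upwards [ae_restrict_mem measurableSet_Ioc] with y hy
      have hy0 : (0:ℝ) < y := hy.1
      have hber : (1+y)^β ≤ 1 + β*y :=
        rpow_one_add_le_one_add_mul_self (by linarith) hb0.le (by linarith)
      have h1 : (1:ℝ) ≤ (1+y)^β :=
        calc (1:ℝ) = 1^β := (Real.one_rpow β).symm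
          _ ≤ (1+y)^β := Real.rpow_le_rpow (by norm_num) (by linarith) hb0.le
      rw [norm_mul, norm_eq_abs, norm_eq_abs, abs_of_nonneg (Real.rpow_nonneg hy0.le _),
        abs_of_nonpos (by linarith)]
      calc -(1-(1+y)^β) * y^(-1-a) ≤ (β*y) * y^(-1-a) :=
            mul_le_mul_of_nonneg_right (by linarith) (Real.rpow_nonneg hy0.le _)
        _ = β * y^(-a) := by
            rw [mul_assoc]
            congr 1
            rw [← Real.rpow_one_add' hy0.le (by linarith)]
            ring_nf
  · refine Integrable.mono' (g := fun y : ℝ => 2^β * y^(β-1-a))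
      ((integrableOn_Ioi_rpow_of_lt (a := β-1-a) (c := 1) (by linarith) (by norm_num)).const_mul _) (hmeas _) ?_
    filter_upwards [ae_restrict_mem measurableSet_Ioi] with y hy
    have hy1 : (1:ℝ) < y := hy
    have hy0 : (0:ℝ) < y := by linarith
    have h1 : (1:ℝ) ≤ (1+y)^β :=
      calc (1:ℝ) = 1^β := (Real.one_rpow β).symm
        _ ≤ (1+y)^β := Real.rpow_le_rpow (by norm_num) (by linarith) hb0.le
    have h2 : (1+y)^β ≤ (2*y)^β := Real.rpow_le_rpow (by linarith) (by linarith) hb0.le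
    rw [norm_mul, norm_eq_abs, norm_eq_abs, abs_of_nonneg (Real.rpow_nonneg hy0.le _),
      abs_of_nonpos (by linarith)]
    calc -(1-(1+y)^β) * y^(-1-a) ≤ (2*y)^β * y^(-1-a) :=
          mul_le_mul_of_nonneg_right (by linarith) (Real.rpow_nonneg hy0.le _)
      _ = 2^β * y^(β-1-a) := by
          rw [Real.mul_rpow (by norm_num) hy0.le, mul_assoc, ← Real.rpow_add hy0]
          ring_nf

include ha0 ha1 hb0 hba in
lemma int5a : IntegrableOn (fun y : ℝ => (1-(1-y)^β) * y^(-1-a)) (Ioc 0 1) := by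
  have hmeas : AEStronglyMeasurable (fun y : ℝ => (1-(1-y)^β) * y^(-1-a)) (volume.restrict (Ioc (0:ℝ) 1)) :=
    ((measurable_const.sub ((measurable_const.sub measurable_id).pow measurable_const)).mul
      (measurable_id.pow measurable_const)).aestronglyMeasurable
  refine Integrable.mono' (g := fun y : ℝ => y^(-a)) ?_ hmeas ?_
  · have : IntervalIntegrable (fun y : ℝ => y^(-a)) volume 0 1 :=
      intervalIntegral.intervalIntegrable_rpow' (by linarith)
    exact (intervalIntegrable_iff_integrableOn_Ioc_of_le (by norm_num)).mp this
  · filter_upwards [ae_restrict_mem measurableSet_Ioc] with y hy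
    have hy0 : (0:ℝ) < y := hy.1
    have hy1 : y ≤ 1 := hy.2
    have hkey : 0 ≤ 1-(1-y)^β ∧ 1-(1-y)^β ≤ y := by
      rcases eq_or_lt_of_le hy1 with rfl | hlt
      · rw [sub_self, Real.zero_rpow hb0.ne']
        norm_num
      · have h1y : (0:ℝ) < 1 - y := by linarith
        constructor
        · have : (1-y)^β ≤ 1 := Real.rpow_le_one h1y.le (by linarith) hb0.le
          linarith
        · have : (1-y) ≤ (1-y)^β := by
            calc (1-y) = (1-y)^(1:ℝ) := (Real.rpow_one _).symm
              _ ≤ (1-y)^β := Real.rpow_le_rpow_of_exponent_ge h1y (by linarith) (by linarith)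
          linarith
    rw [norm_mul, norm_eq_abs, norm_eq_abs, abs_of_nonneg (Real.rpow_nonneg hy0.le _),
      abs_of_nonneg hkey.1]
    calc (1-(1-y)^β) * y^(-1-a) ≤ y * y^(-1-a) :=
          mul_le_mul_of_nonneg_right hkey.2 (Real.rpow_nonneg hy0.le _)
      _ = y^(-a) := by rw [← Real.rpow_one_add' hy0.le (by linarith)]; ring_nf

include ha0 ha1 hb0 hba in
lemma int5b : IntegrableOn (fun y : ℝ => (1-y)^(β-1) * y^(-a)) (Ioc 0 1) := by
  have hmeas : ∀ t : Set ℝ, AEStronglyMeasurable (fun y : ℝ => (1-y)^(β-1) * y^(-a)) (volume.restrict t) :=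
    fun t => (((measurable_const.sub measurable_id).pow measurable_const).mul
      (measurable_id.pow measurable_const)).aestronglyMeasurable
  have hsplit : Ioc (0:ℝ) (1/2) ∪ Ioc (1/2 : ℝ) 1 = Ioc (0:ℝ) 1 :=
    Ioc_union_Ioc_eq_Ioc (by norm_num) (by norm_num)
  rw [← hsplit]
  refine IntegrableOn.union ?_ ?_
  · refine Integrable.mono' (g := fun y : ℝ => (1/2 : ℝ)^(β-1) * y^(-a)) ?_ (hmeas _) ?_
    · refine Integrable.const_mul ?_ _
      have : IntervalIntegrable (fun y : ℝ => y^(-a)) volume 0 (1/2) :=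
        intervalIntegral.intervalIntegrable_rpow' (by linarith)
      exact (intervalIntegrable_iff_integrableOn_Ioc_of_le (by norm_num)).mp this
    · filter_upwards [ae_restrict_mem measurableSet_Ioc] with y hy
      have hy0 : (0:ℝ) < y := hy.1
      have hy2 : y ≤ 1/2 := hy.2
      rw [norm_mul, norm_eq_abs, norm_eq_abs, abs_of_nonneg (Real.rpow_nonneg hy0.le _),
        abs_of_nonneg (Real.rpow_nonneg (by linarith) _)]
      exact mul_le_mul_of_nonneg_right
        (Real.rpow_le_rpow_of_nonpos (by norm_num) (by linarith) (by linarith))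
        (Real.rpow_nonneg hy0.le _)
  · refine Integrable.mono' (g := fun y : ℝ => (1/2 : ℝ)^(-a) * (1-y)^(β-1)) ?_ (hmeas _) ?_
    · refine Integrable.const_mul ?_ _
      have h1 : IntervalIntegrable (fun y : ℝ => y^(β-1)) volume 0 (1/2) :=
        intervalIntegral.intervalIntegrable_rpow' (by linarith)
      have h2 := h1.comp_sub_left 1
      norm_num at h2
      exact (intervalIntegrable_iff_integrableOn_Ioc_of_le (by norm_num)).mp h2.symm
    · filter_upwards [ae_restrict_mem measurableSet_Ioc] with y hy
      have hy0 : (1/2:ℝ) < y := hy.1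
      have hy1 : y ≤ 1 := hy.2
      rw [norm_mul, norm_eq_abs, norm_eq_abs, abs_of_nonneg (Real.rpow_nonneg (by linarith) _),
        abs_of_nonneg (Real.rpow_nonneg (by linarith) _), mul_comm]
      exact mul_le_mul_of_nonneg_right
        (Real.rpow_le_rpow_of_nonpos (by norm_num) (by linarith) (by linarith))
        (Real.rpow_nonneg (by linarith) _)

include ha0 ha1 hb0 hba in
lemma pos_side : ∫ y in Ioi (0:ℝ), (1-(1+y)^β) * y^(-1-a)
    = -(β/a) * (Gamma (1-a) * Gamma (a-β) / Gamma (1-β)) := by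
  set G : ℝ → ℝ := fun y => (1-(1+y)^β) * y^(-a) / (-a) with hG
  set G' : ℝ → ℝ := fun y => (1-(1+y)^β) * y^(-1-a) + (β/a) * ((1+y)^(β-1) * y^(-a)) with hG'
  have hderiv : ∀ y ∈ Ioi (0:ℝ), HasDerivAt G (G' y) y := by
    intro y hy
    have hy0 : (0:ℝ) < y := hy
    have h1 : HasDerivAt (fun z : ℝ => (1+z)^β) (β * (1+y)^(β-1) * 1) y := by
      exact (Real.hasDerivAt_rpow_const (x := 1+y) (p := β)
        (Or.inl (by linarith))).comp y ((hasDerivAt_id y).const_add 1)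
    have h2 : HasDerivAt (fun z : ℝ => z^(-a)) (-a * y^(-a-1)) y :=
      Real.hasDerivAt_rpow_const (Or.inl hy0.ne')
    have h3 := ((h1.const_sub 1).mul h2).div_const (-a)
    refine h3.congr_deriv (Eq.symm ?_)
    rw [hG']
    have e : y^(-a-1) = y^(-1-a) := by ring_nf
    have ha' : (a:ℝ) ≠ 0 := ha0.ne'
    rw [e, eq_div_iff (neg_ne_zero.mpr ha')]
    field_simp
    ring
  have hcont : ContinuousWithinAt G (Ici 0) 0 := by
    have hG0 : G 0 = 0 := by
      simp [hG, Real.one_rpow]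
    rw [ContinuousWithinAt, hG0]
    apply squeeze_zero_norm' (a := fun y => (β/a) * y^(1-a))
    · filter_upwards [self_mem_nhdsWithin] with y (hy : y ∈ Ici (0:ℝ))
      rcases eq_or_lt_of_le (mem_Ici.mp hy) with rfl | hy0
      · simp [hG0, Real.zero_rpow (show (1:ℝ)-a ≠ 0 by intro h; exact absurd h (by intro h'; linarith))]
      · have hber : (1+y)^β ≤ 1 + β*y :=
          rpow_one_add_le_one_add_mul_self (by linarith) hb0.le (by linarith)
        have h1 : (1:ℝ) ≤ (1+y)^β :=
          calc (1:ℝ) = 1^β := (Real.one_rpow β).symm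
            _ ≤ (1+y)^β := Real.rpow_le_rpow (by norm_num) (by linarith) hb0.le
        have : ‖G y‖ = (((1+y)^β - 1) * y^(-a)) / a := by
          rw [hG, norm_eq_abs, abs_div, abs_mul, abs_of_nonpos (by linarith),
            abs_of_nonneg (Real.rpow_nonneg hy0.le _), abs_neg, abs_of_pos ha0]
          ring_nf
        rw [this]
        rw [div_le_iff₀ ha0, show (β/a) * y^(1-a) * a = β * y^(1-a) by field_simp]
        calc ((1+y)^β - 1) * y^(-a) ≤ (β*y) * y^(-a) :=
              mul_le_mul_of_nonneg_right (by linarith) (Real.rpow_nonneg hy0.le _)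
          _ = β * y^(1-a) := by
              rw [mul_assoc]
              congr 1
              rw [show (1:ℝ)-a = 1 + (-a) by ring, Real.rpow_one_add' hy0.le (by intro h; linarith [show a = 1 by linarith])]
    · have : Tendsto (fun y : ℝ => y^(1-a)) (nhdsWithin 0 (Ici 0)) (𝓝 ((0:ℝ)^(1-a))) :=
        ((Real.continuousAt_rpow_const 0 (1-a) (Or.inr (by linarith))).continuousWithinAt)
      rw [Real.zero_rpow (by intro h; linarith [show a = 1 by linarith])] at this
      simpa using this.const_mul (β/a)
  have htop : Tendsto G atTop (𝓝 0) := by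
    apply squeeze_zero_norm' (a := fun y => (2^β/a) * y^(β-a))
    · filter_upwards [eventually_ge_atTop (1:ℝ)] with y hy1
      have hy0 : (0:ℝ) < y := by linarith
      have h1 : (1:ℝ) ≤ (1+y)^β :=
        calc (1:ℝ) = 1^β := (Real.one_rpow β).symm
          _ ≤ (1+y)^β := Real.rpow_le_rpow (by norm_num) (by linarith) hb0.le
      have h2 : (1+y)^β ≤ (2*y)^β := Real.rpow_le_rpow (by linarith) (by linarith) hb0.le
      have : ‖G y‖ = (((1+y)^β - 1) * y^(-a)) / a := by
        rw [hG, norm_eq_abs, abs_div, abs_mul, abs_of_nonpos (by linarith),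
          abs_of_nonneg (Real.rpow_nonneg hy0.le _), abs_neg, abs_of_pos ha0]
        ring_nf
      rw [this, div_le_iff₀ ha0, show (2^β/a) * y^(β-a) * a = 2^β * y^(β-a) by field_simp]
      calc ((1+y)^β - 1) * y^(-a) ≤ (2*y)^β * y^(-a) :=
            mul_le_mul_of_nonneg_right (by linarith) (Real.rpow_nonneg hy0.le _)
        _ = 2^β * y^(β-a) := by
            rw [Real.mul_rpow (by norm_num) hy0.le, mul_assoc, ← Real.rpow_add hy0]
            ring_nf
    · have := (tendsto_rpow_neg_atTop (show (0:ℝ) < a - β by linarith)).const_mul (2^β/a)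
      rw [mul_zero] at this
      convert this using 2 with y
      rw [neg_sub]
  have hint3 := int3 ha0 ha1 hb0 hba
  have hint4 := int4 ha0 ha1 hb0 hba
  have f'int : IntegrableOn G' (Ioi (0:ℝ)) := hint4.add (hint3.const_mul (β/a))
  have key := integral_Ioi_of_hasDerivAt_of_tendsto hcont hderiv f'int htop
  have hG0 : G 0 = 0 := by simp [hG, Real.one_rpow]
  rw [hG0, sub_zero] at key
  have hsplit : ∫ y in Ioi (0:ℝ), G' y
      = (∫ y in Ioi (0:ℝ), (1-(1+y)^β) * y^(-1-a))
        + (β/a) * ∫ y in Ioi (0:ℝ), (1+y)^(β-1) * y^(-a) := by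
    rw [hG', integral_add hint4 (hint3.const_mul (β/a)), integral_const_mul]
  have hbeta : ∫ y in Ioi (0:ℝ), (1+y)^(β-1) * y^(-a)
      = Gamma (1-a) * Gamma (a-β) / Gamma (1-β) := by
    have B := beta_Ioi (show (0:ℝ) < 1-a by linarith) (show (0:ℝ) < a-β by linarith)
    rw [show (1-a)+(a-β) = 1-β by ring] at B
    rw [← B]
    refine setIntegral_congr_fun measurableSet_Ioi fun y _ => ?_
    rw [show (1-a)-1 = -a by ring, show -((1:ℝ)-β) = β-1 by ring]
    ring
  rw [hsplit, hbeta] at key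
  linarith [key]

include ha0 ha1 hb0 hba in
lemma neg_ioc : ∫ y in Ioc (0:ℝ) 1, (1-(1-y)^β) * y^(-1-a)
    = -1/a + (β/a) * (Gamma (1-a) * Gamma β / Gamma (1-a+β)) := by
  have ha' : (a:ℝ) ≠ 0 := ha0.ne'
  set H : ℝ → ℝ := fun y => (1-(1-y)^β) * y^(-a) / (-a) with hH
  set H' : ℝ → ℝ := fun y => (1-(1-y)^β) * y^(-1-a) - (β/a) * ((1-y)^(β-1) * y^(-a)) with hH'
  have hbound : ∀ y ∈ Icc (0:ℝ) 1, 0 ≤ 1-(1-y)^β ∧ 1-(1-y)^β ≤ y := by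
    intro y hy
    rcases eq_or_lt_of_le hy.2 with rfl | hlt
    · rw [sub_self, Real.zero_rpow hb0.ne']
      norm_num
    · have h1y : (0:ℝ) < 1 - y := by linarith
      constructor
      · have : (1-y)^β ≤ 1 := Real.rpow_le_one h1y.le (by linarith [hy.1]) hb0.le
        linarith
      · have : (1-y) ≤ (1-y)^β :=
          calc (1-y) = (1-y)^(1:ℝ) := (Real.rpow_one _).symm
            _ ≤ (1-y)^β := Real.rpow_le_rpow_of_exponent_ge h1y (by linarith [hy.1]) (by linarith)
        linarith
  have hH0 : H 0 = 0 := by simp [hH, Real.one_rpow]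
  have hcont : ContinuousOn H (Icc 0 1) := by
    intro x hx
    rcases eq_or_lt_of_le hx.1 with rfl | hx0
    · rw [ContinuousWithinAt, hH0]
      apply squeeze_zero_norm' (a := fun y => (1/a) * y^(1-a))
      · filter_upwards [self_mem_nhdsWithin] with y hy
        have hy0 : (0:ℝ) ≤ y := hy.1
        rcases eq_or_lt_of_le hy0 with rfl | hy0'
        · simp [hH0, Real.zero_rpow (show (1:ℝ)-a ≠ 0 by intro h; linarith [show a = 1 by linarith])]
        · have hb := hbound y hy
          have : ‖H y‖ = ((1-(1-y)^β) * y^(-a)) / a := by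
            rw [hH, norm_eq_abs, abs_div, abs_mul, abs_of_nonneg hb.1,
              abs_of_nonneg (Real.rpow_nonneg hy0 _), abs_neg, abs_of_pos ha0]
          rw [this, div_le_iff₀ ha0, show (1/a) * y^(1-a) * a = y^(1-a) by field_simp]
          calc (1-(1-y)^β) * y^(-a) ≤ y * y^(-a) :=
                mul_le_mul_of_nonneg_right hb.2 (Real.rpow_nonneg hy0 _)
            _ = y^(1-a) := by
                rw [show (1:ℝ)-a = 1 + (-a) by ring,
                  Real.rpow_one_add' hy0 (by intro h; linarith [show a = 1 by linarith])]
      · have : Tendsto (fun y : ℝ => y^(1-a)) (nhdsWithin 0 (Icc 0 1)) (𝓝 ((0:ℝ)^(1-a))) :=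
          ((Real.continuousAt_rpow_const 0 (1-a) (Or.inr (by linarith))).continuousWithinAt)
        rw [Real.zero_rpow (by intro h; linarith [show a = 1 by linarith])] at this
        simpa using this.const_mul (1/a)
    · have hxne : x ≠ 0 := ne_of_gt hx0
      have c1 : ContinuousAt (fun y : ℝ => (1-y)^β) x := by
        have := (Real.continuousAt_rpow_const (1-x) β (Or.inr hb0.le)).comp
          (Continuous.continuousAt (continuous_const.sub continuous_id) : ContinuousAt (fun y : ℝ => 1-y) x)
        exact this
      have c2 : ContinuousAt (fun y : ℝ => y^(-a)) x :=
        Real.continuousAt_rpow_const x (-a) (Or.inl hxne)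
      exact (((continuous_const.continuousAt.sub c1).mul c2).div_const (-a)).continuousWithinAt
  have hderiv : ∀ x ∈ Ioo (0:ℝ) 1, HasDerivWithinAt H (H' x) (Ioi x) x := by
    intro x hx
    have hx0 : (0:ℝ) < x := hx.1
    have h1x : (0:ℝ) < 1 - x := by linarith [hx.2]
    have h1 : HasDerivAt (fun z : ℝ => (1-z)^β) (β * (1-x)^(β-1) * (-1)) x :=
      (Real.hasDerivAt_rpow_const (x := 1-x) (p := β) (Or.inl h1x.ne')).comp x
        ((hasDerivAt_id x).const_sub 1)
    have h2 : HasDerivAt (fun z : ℝ => z^(-a)) (-a * x^(-a-1)) x :=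
      Real.hasDerivAt_rpow_const (Or.inl hx0.ne')
    have h3 := ((h1.const_sub 1).mul h2).div_const (-a)
    have e : x^(-a-1) = x^(-1-a) := by ring_nf
    have hEq : H' x = (-(β * (1-x)^(β-1) * (-1)) * x^(-a) + (1-(1-x)^β) * (-a * x^(-a-1))) / -a := by
      rw [hH', e, eq_div_iff (neg_ne_zero.mpr ha0.ne')]
      field_simp
      ring
    rw [hEq]
    exact h3.hasDerivWithinAt
  have hi5a := int5a ha0 ha1 hb0 hba
  have hi5b := int5b ha0 ha1 hb0 hba
  have hint : IntervalIntegrable H' volume 0 1 := by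
    rw [intervalIntegrable_iff_integrableOn_Ioc_of_le (by norm_num)]
    exact hi5a.sub (hi5b.const_mul (β/a))
  have key := intervalIntegral.integral_eq_sub_of_hasDeriv_right_of_le (by norm_num : (0:ℝ) ≤ 1)
    hcont hderiv hint
  have hH1 : H 1 = -1/a := by
    rw [hH]
    simp only [sub_self, Real.zero_rpow hb0.ne', Real.one_rpow, sub_zero]
    field_simp
  rw [hH1, hH0, sub_zero] at key
  have hsplit : ∫ y in (0:ℝ)..1, H' y
      = (∫ y in Ioc (0:ℝ) 1, (1-(1-y)^β) * y^(-1-a))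
        - (β/a) * ∫ y in Ioc (0:ℝ) 1, (1-y)^(β-1) * y^(-a) := by
    rw [hH', intervalIntegral.integral_of_le (by norm_num : (0:ℝ) ≤ 1),
      integral_sub hi5a (hi5b.const_mul (β/a)), integral_const_mul]
  have hbeta : ∫ y in Ioc (0:ℝ) 1, (1-y)^(β-1) * y^(-a)
      = Gamma (1-a) * Gamma β / Gamma (1-a+β) := by
    have B := real_beta (show (0:ℝ) < 1-a by linarith) hb0
    rw [intervalIntegral.integral_of_le (by norm_num : (0:ℝ) ≤ 1)] at B
    rw [← B]
    refine setIntegral_congr_fun measurableSet_Ioc fun y _ => ?_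
    rw [show (1-a)-1 = -a by ring]
    ring
  rw [hsplit, hbeta] at key
  linarith [key]

include ha0 ha1 hb0 hba in
lemma neg_int : IntegrableOn (fun y : ℝ => (1-(max (1-y) 0)^β) * y^(-1-a)) (Ioi 0) := by
  rw [← Ioc_union_Ioi_eq_Ioi (le_of_lt one_pos)]
  refine IntegrableOn.union ?_ ?_
  · refine ((int5a ha0 ha1 hb0 hba).congr_fun (fun y hy => ?_) measurableSet_Ioc)
    rw [max_eq_left (by linarith [hy.2] : (0:ℝ) ≤ 1 - y)]
  · refine (((integrableOn_Ioi_rpow_of_lt (a := -1-a) (c := 1) (by linarith) (by norm_num))).congr_fun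
      (fun y hy => ?_) measurableSet_Ioi)
    rw [max_eq_right (by linarith [mem_Ioi.mp hy] : 1 - y ≤ (0:ℝ)), Real.zero_rpow hb0.ne']
    ring

include ha0 ha1 hb0 hba in
lemma neg_side : ∫ y in Ioi (0:ℝ), (1-(max (1-y) 0)^β) * y^(-1-a)
    = (β/a) * (Gamma (1-a) * Gamma β / Gamma (1-a+β)) := by
  rw [← Ioc_union_Ioi_eq_Ioi (le_of_lt one_pos)]
  rw [setIntegral_union (Ioc_disjoint_Ioi le_rfl) measurableSet_Ioi
    ((int5a ha0 ha1 hb0 hba).congr_fun (fun y hy => by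
      rw [max_eq_left (by linarith [hy.2] : (0:ℝ) ≤ 1 - y)]) measurableSet_Ioc)
    (((integrableOn_Ioi_rpow_of_lt (a := -1-a) (c := 1) (by linarith) (by norm_num))).congr_fun
      (fun y hy => by
        rw [max_eq_right (by linarith [mem_Ioi.mp hy] : 1 - y ≤ (0:ℝ)), Real.zero_rpow hb0.ne']
        ring) measurableSet_Ioi)]
  have e1 : ∫ y in Ioc (0:ℝ) 1, (1-(max (1-y) 0)^β) * y^(-1-a)
      = ∫ y in Ioc (0:ℝ) 1, (1-(1-y)^β) * y^(-1-a) := by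
    refine setIntegral_congr_fun measurableSet_Ioc fun y hy => ?_
    rw [max_eq_left (by linarith [hy.2] : (0:ℝ) ≤ 1 - y)]
  have e2 : ∫ y in Ioi (1:ℝ), (1-(max (1-y) 0)^β) * y^(-1-a) = ∫ y in Ioi (1:ℝ), y^(-1-a) := by
    refine setIntegral_congr_fun measurableSet_Ioi fun y hy => ?_
    rw [max_eq_right (by linarith [mem_Ioi.mp hy] : 1 - y ≤ (0:ℝ)), Real.zero_rpow hb0.ne']
    ring
  have e3 : ∫ y in Ioi (1:ℝ), y^(-1-a) = 1/a := by
    rw [integral_Ioi_rpow_of_lt (a := -1-a) (c := 1) (by linarith) (by norm_num)]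
    rw [Real.one_rpow, show (-1-a+1 : ℝ) = -a by ring]
    rw [neg_div, div_neg, neg_neg, one_div]
  rw [e1, e2, e3, neg_ioc ha0 ha1 hb0 hba]
  ring
end aux

lemma integrableOn_Iic_of_neg {g : ℝ → ℝ} (h : IntegrableOn (fun x => g (-x)) (Ioi (0:ℝ))) :
    IntegrableOn g (Iic (0:ℝ)) := by
  have A : MeasurableEmbedding (fun x : ℝ => -x) :=
    (Homeomorph.neg ℝ).isClosedEmbedding.measurableEmbedding
  have h1 : IntegrableOn (fun x => g (-x)) (Ici (0:ℝ)) :=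
    (Iff.mpr integrableOn_Ici_iff_integrableOn_Ioi) h
  have hmap : volume.restrict (Iic (0:ℝ))
      = Measure.map (fun x : ℝ => -x) (volume.restrict (Ici (0:ℝ))) := by
    conv_lhs => rw [← Measure.map_neg_eq_self (volume : Measure ℝ)]
    rw [Measure.restrict_map A.measurable measurableSet_Iic]
    congr 1
    ext x
    simp
  rw [IntegrableOn, hmap, A.integrable_map_iff]
  exact h1

theorem stmt5 (s β : ℝ) (hs : s ∈ Set.Ioo (0:ℝ) (1/2)) (hβ : β ∈ Set.Ioo 0 (2*s)) :
    ∫ y : ℝ, (1 - (max (1+y) 0) ^ β) * |y| ^ (-1 - 2*s)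
      = (Real.Gamma (1-2*s) / (2*s)) *
        (Real.Gamma (2*s-β) / Real.Gamma (-β) + Real.Gamma (1+β) / Real.Gamma (1-2*s+β)) := by
  obtain ⟨hs0, hs1⟩ := hs
  obtain ⟨hb0, hba⟩ := hβ
  have ha0 : (0:ℝ) < 2*s := by linarith
  have ha1 : 2*s < 1 := by linarith
  have hβ1 : β < 1 := by linarith
  set f : ℝ → ℝ := fun y => (1 - (max (1+y) 0)^β) * |y|^(-1 - 2*s) with hf
  have hposEq : EqOn (fun y : ℝ => (1-(1+y)^(β:ℝ)) * y^(-1-2*s)) f (Ioi 0) := by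
    intro y hy
    have hy0 : (0:ℝ) < y := hy
    rw [hf]
    simp only
    rw [max_eq_left (by linarith : (0:ℝ) ≤ 1+y), abs_of_pos hy0]
  have hnegEq : EqOn (fun y : ℝ => (1-(max (1-y) 0)^(β:ℝ)) * y^(-1-2*s)) (fun y => f (-y)) (Ioi 0) := by
    intro y hy
    have hy0 : (0:ℝ) < y := hy
    rw [hf]
    simp only
    rw [show (1:ℝ) + -y = 1 - y by ring, abs_neg, abs_of_pos hy0]
  have hIoi : IntegrableOn f (Ioi 0) :=
    (int4 ha0 ha1 hb0 hba).congr_fun hposEq measurableSet_Ioi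
  have hIic : IntegrableOn f (Iic 0) :=
    integrableOn_Iic_of_neg ((neg_int ha0 ha1 hb0 hba).congr_fun hnegEq measurableSet_Ioi)
  rw [show ∫ y : ℝ, (1 - (max (1+y) 0) ^ β) * |y| ^ (-1 - 2*s) = ∫ y : ℝ, f y from rfl]
  rw [← intervalIntegral.integral_Iic_add_Ioi hIic hIoi]
  have hIicVal : ∫ x in Iic (0:ℝ), f x = (β/(2*s)) * (Gamma (1-2*s) * Gamma β / Gamma (1-2*s+β)) := by
    have e1 := integral_comp_neg_Iic (0:ℝ) (fun y => f (-y))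
    simp only [neg_neg, neg_zero] at e1
    rw [e1, ← setIntegral_congr_fun measurableSet_Ioi hnegEq]
    exact neg_side ha0 ha1 hb0 hba
  have hIoiVal : ∫ x in Ioi (0:ℝ), f x
      = -(β/(2*s)) * (Gamma (1-2*s) * Gamma (2*s-β) / Gamma (1-β)) := by
    rw [← setIntegral_congr_fun measurableSet_Ioi hposEq]
    exact pos_side ha0 ha1 hb0 hba
  rw [hIicVal, hIoiVal]
  have hΓ1 : Gamma (1-β) = -β * Gamma (-β) := by
    rw [show (1:ℝ)-β = -β + 1 by ring, Real.Gamma_add_one (neg_ne_zero.mpr hb0.ne')]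
  have hΓ2 : Gamma (1+β) = β * Gamma β := by
    rw [show (1:ℝ)+β = β+1 by ring, Real.Gamma_add_one hb0.ne']
  have hΓneg : Gamma (-β) ≠ 0 := by
    refine Real.Gamma_ne_zero fun m => ?_
    intro h
    have hm : β = (m:ℝ) := by
      have := neg_injective h
      exact this
    rcases Nat.eq_zero_or_pos m with rfl | hm1
    · rw [hm] at hb0; simp at hb0
    · have : (1:ℝ) ≤ (m:ℝ) := by exact_mod_cast hm1
      linarith [hm ▸ hβ1]
  have hΓ3 : Gamma (1-2*s+β) ≠ 0 := (Real.Gamma_pos_of_pos (by linarith)).ne'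
  rw [hΓ1, hΓ2]
  have h2s : (2*s : ℝ) ≠ 0 := ha0.ne'
  field_simp
  ring
end
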